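/- arXiv:1802.00531 — 7 statements merged into one kernel-verified Lean document; each statement's English description precedes it below -/
import Mathlib

section
/- For any positive integer n, the sum over all units a of Z/nZ of gcd(a-1, n) equals φ(n)·σ₀(n), where φ is Euler's totient function and σ₀(n) is the number of divisors of n. -/
open Finset

lemma ker_card (n d : ℕ) [NeZero n] (hd : d ∣ n) :
    Nat.totient d * Nat.card {a : (ZMod n)ˣ // ZMod.unitsMap hd a = 1} = Nat.totient n := by
  have : NeZero d := ⟨fun h => by subst h; exact (NeZero.ne n) (Nat.eq_zero_of_zero_dvd hd)⟩
  have e1 : ((ZMod n)ˣ ⧸ (ZMod.unitsMap hd).ker) ≃ (ZMod d)ˣ :=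
    QuotientGroup.quotientKerEquivOfSurjective _ (ZMod.unitsMap_surjective hd)
  have e2 : Nat.card (ZMod n)ˣ =
      Nat.card ((ZMod n)ˣ ⧸ (ZMod.unitsMap hd).ker) * Nat.card (ZMod.unitsMap hd).ker :=
    Subgroup.card_eq_card_quotient_mul_card_subgroup _
  have e3 : Nat.card ((ZMod n)ˣ ⧸ (ZMod.unitsMap hd).ker) = Nat.totient d := by
    rw [Nat.card_congr e1, Nat.card_eq_fintype_card, ZMod.card_units_eq_totient]
  have e4 : Nat.card {a : (ZMod n)ˣ // ZMod.unitsMap hd a = 1} =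
      Nat.card (ZMod.unitsMap hd).ker :=
    Nat.card_congr (Equiv.subtypeEquivRight (fun a => by simp [MonoidHom.mem_ker]))
  rw [e4, ← e3, ← e2, Nat.card_eq_fintype_card, ZMod.card_units_eq_totient]

lemma dvd_iff_unitsMap (n d : ℕ) [NeZero n] (hd : d ∣ n) (a : (ZMod n)ˣ) :
    d ∣ ((a : ZMod n) - 1).val ↔ ZMod.unitsMap hd a = 1 := by
  have : NeZero d := ⟨fun h => by subst h; exact (NeZero.ne n) (Nat.eq_zero_of_zero_dvd hd)⟩
  rw [← ZMod.natCast_eq_zero_iff, ZMod.natCast_val]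
  rw [Units.ext_iff, ZMod.unitsMap_def, Units.coe_map, Units.val_one]
  have : (ZMod.cast ((a : ZMod n) - 1) : ZMod d) = ZMod.castHom hd (ZMod d) ((a : ZMod n) - 1) := rfl
  rw [this, map_sub, map_one, sub_eq_zero, ZMod.castHom_apply]
  rfl




/-- Menon's identity: for a positive integer `n`,
`∑_{a ∈ (ℤ/nℤ)*} gcd(a-1, n) = φ(n) · σ₀(n)`. -/
theorem menon_identity (n : ℕ) [NeZero n] :
    ∑ a : (ZMod n)ˣ, Nat.gcd ((a : ZMod n) - 1).val n =
      Nat.totient n * ArithmeticFunction.sigma 0 n := by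
  have hn : n ≠ 0 := NeZero.ne n
  have hgcd : ∀ x : ℕ, Nat.gcd x n = ∑ d ∈ n.divisors.filter (· ∣ x), Nat.totient d := by
    intro x
    have h1 : n.divisors.filter (· ∣ Nat.gcd x n) = (Nat.gcd x n).divisors :=
      Nat.divisors_filter_dvd_of_dvd hn (Nat.gcd_dvd_right x n)
    have h2 : n.divisors.filter (· ∣ x) = n.divisors.filter (· ∣ Nat.gcd x n) := by
      apply Finset.filter_congr
      intro d hd
      exact ⟨fun h => Nat.dvd_gcd h (Nat.dvd_of_mem_divisors hd),
        fun h => h.trans (Nat.gcd_dvd_left x n)⟩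
    rw [h2, h1, Nat.sum_totient]
  calc ∑ a : (ZMod n)ˣ, Nat.gcd ((a : ZMod n) - 1).val n
      = ∑ a : (ZMod n)ˣ, ∑ d ∈ n.divisors,
          if d ∣ ((a : ZMod n) - 1).val then Nat.totient d else 0 := by
        simp_rw [hgcd, Finset.sum_filter]
    _ = ∑ d ∈ n.divisors, ∑ a : (ZMod n)ˣ,
          if d ∣ ((a : ZMod n) - 1).val then Nat.totient d else 0 := Finset.sum_comm
    _ = ∑ d ∈ n.divisors, Nat.totient n := by
        apply Finset.sum_congr rfl
        intro d hd
        have hdn : d ∣ n := Nat.dvd_of_mem_divisors hd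
        rw [← Finset.sum_filter, Finset.sum_const, smul_eq_mul, ← Fintype.card_subtype]
        have h3 : Fintype.card {a : (ZMod n)ˣ // d ∣ ((a : ZMod n) - 1).val} =
            Nat.card {a : (ZMod n)ˣ // ZMod.unitsMap hdn a = 1} := by
          rw [← Nat.card_eq_fintype_card]
          exact Nat.card_congr (Equiv.subtypeEquivRight (fun a => by
            rw [dvd_iff_unitsMap n d hdn a]))
        rw [h3, mul_comm]
        exact ker_card n d hdn
    _ = Nat.totient n * ArithmeticFunction.sigma 0 n := by
        rw [Finset.sum_const, smul_eq_mul, ArithmeticFunction.sigma_apply]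
        simp [mul_comm]
end

section
/- For any positive integer n and non-negative integer k, the sum of gcd(a-1, b₁, ..., b_k, n) over all units a of Z/nZ and all (not necessarily unit) b₁, ..., b_k in Z/nZ equals φ(n)·σ_k(n), where σ_k(n) = ∑_{d|n} d^k. -/
open Finset

private lemma nat_dvd_gcd_iff {k m n : ℕ} : k ∣ Nat.gcd m n ↔ k ∣ m ∧ k ∣ n :=
  ⟨fun h => ⟨h.trans (Nat.gcd_dvd_left _ _), h.trans (Nat.gcd_dvd_right _ _)⟩,
   fun h => Nat.dvd_gcd h.1 h.2⟩

private lemma range_filter_dvd_card {n d : ℕ} (hdn : d ∣ n) (hd : 0 < d) :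
    ((Finset.range n).filter (fun m => d ∣ m)).card = n / d := by
  have himg : (Finset.range n).filter (fun m => d ∣ m)
      = (Finset.range (n / d)).image (fun c => d * c) := by
    ext m
    simp only [mem_filter, mem_range, mem_image]
    constructor
    · rintro ⟨hm, c, rfl⟩
      exact ⟨c, (Nat.lt_div_iff_mul_lt' hdn c).2 hm, rfl⟩
    · rintro ⟨c, hc, rfl⟩
      exact ⟨(Nat.lt_div_iff_mul_lt' hdn c).1 hc, c, rfl⟩
  rw [himg, Finset.card_image_of_injective _
    (fun a b h => Nat.eq_of_mul_eq_mul_left hd h), Finset.card_range]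

private lemma zmod_dvd_val_card (n d : ℕ) [NeZero n] (hdn : d ∣ n) (hd : 0 < d) :
    (Finset.univ.filter (fun x : ZMod n => d ∣ x.val)).card = n / d := by
  rw [← range_filter_dvd_card hdn hd]
  apply Finset.card_bij (fun x _ => x.val)
  · intro x hx
    simp only [mem_filter, mem_range]
    exact ⟨ZMod.val_lt x, (mem_filter.1 hx).2⟩
  · intro x _ y _ h
    exact ZMod.val_injective n h
  · intro m hm
    simp only [mem_filter, mem_range] at hm
    refine ⟨(m : ZMod n), ?_, (ZMod.val_cast_of_lt hm.1)⟩
    simp only [mem_filter, mem_univ, true_and, ZMod.val_cast_of_lt hm.1]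
    exact hm.2

private lemma pi_filter_card (n k d : ℕ) [NeZero n] (hdn : d ∣ n) (hd : 0 < d) :
    (Finset.univ.filter (fun b : Fin k → ZMod n => ∀ i, d ∣ (b i).val)).card
      = (n / d) ^ k := by
  classical
  rw [← Fintype.card_subtype]
  rw [Fintype.card_congr (Equiv.subtypePiEquivPi (p := fun _ : Fin k => fun x : ZMod n => d ∣ x.val))]
  rw [Fintype.card_pi]
  simp [Fintype.card_subtype, zmod_dvd_val_card n d hdn hd]

private lemma units_filter_card (n d : ℕ) [NeZero n] (hdn : d ∣ n) (hd : 0 < d) :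
    (Finset.univ.filter (fun a : (ZMod n)ˣ => d ∣ ((a : ZMod n) - 1).val)).card
      = Nat.totient n / Nat.totient d := by
  classical
  haveI : NeZero d := ⟨hd.ne'⟩
  have hker : ∀ a : (ZMod n)ˣ,
      d ∣ ((a : ZMod n) - 1).val ↔ ZMod.unitsMap hdn a = 1 := by
    intro a
    rw [← ZMod.natCast_eq_zero_iff, ZMod.natCast_val]
    have h1 : (ZMod.cast ((a : ZMod n) - 1) : ZMod d)
        = ZMod.castHom hdn (ZMod d) (a : ZMod n) - 1 := by
      rw [← ZMod.castHom_apply (h := hdn), map_sub, map_one]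
    rw [h1, sub_eq_zero, Units.ext_iff]
    have h2 : ((ZMod.unitsMap hdn a : (ZMod d)ˣ) : ZMod d)
        = ZMod.castHom hdn (ZMod d) (a : ZMod n) := rfl
    rw [h2, Units.val_one]
  have hfileq : (Finset.univ.filter (fun a : (ZMod n)ˣ => d ∣ ((a : ZMod n) - 1).val))
      = Finset.univ.filter (fun a : (ZMod n)ˣ => ZMod.unitsMap hdn a = 1) :=
    Finset.filter_congr fun a _ => by rw [hker a]
  have hsurj : Function.Surjective (ZMod.unitsMap hdn) :=
    ZMod.unitsMap_surjective hdn
  have hcard := Subgroup.card_eq_card_quotient_mul_card_subgroup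
    (MonoidHom.ker (ZMod.unitsMap hdn))
  have hquot : Nat.card ((ZMod n)ˣ ⧸ MonoidHom.ker (ZMod.unitsMap hdn))
      = Nat.card (ZMod d)ˣ :=
    Nat.card_congr (QuotientGroup.quotientKerEquivOfSurjective _ hsurj).toEquiv
  rw [hquot, Nat.card_eq_fintype_card, Nat.card_eq_fintype_card,
    ZMod.card_units_eq_totient, ZMod.card_units_eq_totient] at hcard
  have hfil : (Finset.univ.filter (fun a : (ZMod n)ˣ => ZMod.unitsMap hdn a = 1)).card
      = Nat.card (MonoidHom.ker (ZMod.unitsMap hdn)) := by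
    rw [Nat.card_eq_fintype_card, Fintype.card_subtype]
    congr 1
    ext a
    simp [MonoidHom.mem_ker]
  rw [hfileq, hfil, hcard,
    Nat.mul_div_cancel_left _ (Nat.totient_pos.2 hd)]

/-- Sury's identity: for a positive integer `n` and `k ≥ 0`,
`∑_{a ∈ (ℤ/nℤ)*, b₁,…,b_k ∈ ℤ/nℤ} gcd(a-1, b₁, …, b_k, n) = φ(n) · σ_k(n)`. -/
theorem sury_identity (n k : ℕ) [NeZero n] :
    ∑ a : (ZMod n)ˣ, ∑ b : Fin k → ZMod n,
      Nat.gcd ((a : ZMod n) - 1).val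
        (Nat.gcd (Finset.univ.gcd fun i => (b i).val) n) =
      Nat.totient n * ArithmeticFunction.sigma k n := by
  classical
  have hn : 0 < n := Nat.pos_of_ne_zero (NeZero.ne n)
  -- Step 1: pointwise expansion of the gcd as a sum of totients
  have hpt : ∀ (a : (ZMod n)ˣ) (b : Fin k → ZMod n),
      Nat.gcd ((a : ZMod n) - 1).val
          (Nat.gcd (Finset.univ.gcd fun i => (b i).val) n)
      = ∑ d ∈ n.divisors,
          if d ∣ ((a : ZMod n) - 1).val ∧ ∀ i, d ∣ (b i).val
          then Nat.totient d else 0 := by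
    intro a b
    set g := Nat.gcd ((a : ZMod n) - 1).val
      (Nat.gcd (Finset.univ.gcd fun i => (b i).val) n) with hg
    have hgn : g ∣ n := (Nat.gcd_dvd_right _ _).trans (Nat.gcd_dvd_right _ _)
    have hg0 : g ≠ 0 :=
      (Nat.gcd_pos_of_pos_right _ (Nat.gcd_pos_of_pos_right _ hn)).ne'
    have hdvditer : ∀ d, d ∣ n →
        (d ∣ g ↔ d ∣ ((a : ZMod n) - 1).val ∧ ∀ i, d ∣ (b i).val) := by
      intro d hdn
      rw [hg, nat_dvd_gcd_iff, nat_dvd_gcd_iff, Finset.dvd_gcd_iff]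
      constructor
      · rintro ⟨h1, h2, -⟩
        exact ⟨h1, fun i => h2 i (mem_univ i)⟩
      · rintro ⟨h1, h2⟩
        exact ⟨h1, fun i _ => h2 i, hdn⟩
    calc g = ∑ d ∈ g.divisors, Nat.totient d := (Nat.sum_totient g).symm
      _ = ∑ d ∈ n.divisors.filter (· ∣ g), Nat.totient d := by
          rw [Nat.divisors_filter_dvd_of_dvd hn.ne' hgn]
      _ = ∑ d ∈ n.divisors, if d ∣ g then Nat.totient d else 0 :=
          Finset.sum_filter _ _
      _ = ∑ d ∈ n.divisors,
            if d ∣ ((a : ZMod n) - 1).val ∧ ∀ i, d ∣ (b i).val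
            then Nat.totient d else 0 := by
          refine Finset.sum_congr rfl fun d hd => ?_
          exact if_congr (hdvditer d (Nat.mem_divisors.1 hd).1) rfl rfl
  -- Step 2: rewrite and swap the sums
  rw [show (∑ a : (ZMod n)ˣ, ∑ b : Fin k → ZMod n,
      Nat.gcd ((a : ZMod n) - 1).val
        (Nat.gcd (Finset.univ.gcd fun i => (b i).val) n))
      = ∑ d ∈ n.divisors, ∑ a : (ZMod n)ˣ, ∑ b : Fin k → ZMod n,
          (if d ∣ ((a : ZMod n) - 1).val ∧ ∀ i, d ∣ (b i).val
           then Nat.totient d else 0) from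
    calc ∑ a : (ZMod n)ˣ, ∑ b : Fin k → ZMod n,
          Nat.gcd ((a : ZMod n) - 1).val
            (Nat.gcd (Finset.univ.gcd fun i => (b i).val) n)
        = ∑ a : (ZMod n)ˣ, ∑ d ∈ n.divisors, ∑ b : Fin k → ZMod n,
            (if d ∣ ((a : ZMod n) - 1).val ∧ ∀ i, d ∣ (b i).val
             then Nat.totient d else 0) :=
          Finset.sum_congr rfl fun a _ =>
            (Finset.sum_congr rfl fun b _ => hpt a b).trans Finset.sum_comm
      _ = ∑ d ∈ n.divisors, ∑ a : (ZMod n)ˣ, ∑ b : Fin k → ZMod n,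
            (if d ∣ ((a : ZMod n) - 1).val ∧ ∀ i, d ∣ (b i).val
             then Nat.totient d else 0) := Finset.sum_comm]
  -- Step 3: evaluate the inner double sum for each divisor d
  have hinner : ∀ d ∈ n.divisors,
      (∑ a : (ZMod n)ˣ, ∑ b : Fin k → ZMod n,
        (if d ∣ ((a : ZMod n) - 1).val ∧ ∀ i, d ∣ (b i).val
         then Nat.totient d else 0))
      = Nat.totient n * (n / d) ^ k := by
    intro d hd
    obtain ⟨hdn, -⟩ := Nat.mem_divisors.1 hd
    have hd0 : 0 < d := Nat.pos_of_dvd_of_pos hdn hn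
    have h1 : ∀ a : (ZMod n)ˣ,
        (∑ b : Fin k → ZMod n,
          (if d ∣ ((a : ZMod n) - 1).val ∧ ∀ i, d ∣ (b i).val
           then Nat.totient d else 0))
        = if d ∣ ((a : ZMod n) - 1).val
          then (n / d) ^ k * Nat.totient d else 0 := by
      intro a
      by_cases hP : d ∣ ((a : ZMod n) - 1).val
      · simp only [hP, true_and, if_true]
        rw [← Finset.sum_filter, Finset.sum_const, smul_eq_mul,
          pi_filter_card n k d hdn hd0]
      · simp [hP]
    calc (∑ a : (ZMod n)ˣ, ∑ b : Fin k → ZMod n,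
        (if d ∣ ((a : ZMod n) - 1).val ∧ ∀ i, d ∣ (b i).val
         then Nat.totient d else 0))
        = ∑ a : (ZMod n)ˣ,
            (if d ∣ ((a : ZMod n) - 1).val
             then (n / d) ^ k * Nat.totient d else 0) :=
          Finset.sum_congr rfl fun a _ => h1 a
      _ = (Nat.totient n / Nat.totient d) * ((n / d) ^ k * Nat.totient d) := by
          rw [← Finset.sum_filter, Finset.sum_const, smul_eq_mul,
            units_filter_card n d hdn hd0]
      _ = Nat.totient n * (n / d) ^ k := by
          have hdvd : Nat.totient d ∣ Nat.totient n := Nat.totient_dvd_of_dvd hdn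
          rw [mul_comm ((n / d) ^ k) (Nat.totient d), ← mul_assoc,
            Nat.div_mul_cancel hdvd]
  rw [Finset.sum_congr rfl hinner, ← Finset.mul_sum,
    Nat.sum_div_divisors n (· ^ k), ArithmeticFunction.sigma_apply]
end

section
/- Let n be a positive integer and χ a Dirichlet character modulo n with conductor d. Then ∑_{a ∈ (Z/nZ)*} gcd(a-1, n)·χ(a) = φ(n)·σ₀(n/d). -/
open Finset DirichletCharacter

lemma zc_unitsMap_eq_one_iff {n e : ℕ} [NeZero n] [NeZero e] (h : e ∣ n) (u : (ZMod n)ˣ) :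
    ZMod.unitsMap h u = 1 ↔ e ∣ ((u : ZMod n) - 1).val := by
  rw [← Units.val_inj]
  have h1 : (ZMod.unitsMap h u : ZMod e) = ZMod.castHom h (ZMod e) (u : ZMod n) := rfl
  rw [h1, Units.val_one, ← sub_eq_zero, ← map_one (ZMod.castHom h (ZMod e)), ← map_sub,
    ZMod.castHom_apply, ← ZMod.natCast_val, ZMod.natCast_eq_zero_iff]

lemma zc_factorsThrough_gcd {n : ℕ} [NeZero n] (χ : DirichletCharacter ℂ n) {e d : ℕ}
    (he : χ.FactorsThrough e) (hd : χ.FactorsThrough d) :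
    χ.FactorsThrough (Nat.gcd e d) := by
  have hed : e ∣ n := he.dvd
  have hdd : d ∣ n := hd.dvd
  have hne : NeZero e := ⟨fun h => (NeZero.ne n) (Nat.eq_zero_of_zero_dvd (h ▸ hed))⟩
  have hnd : NeZero d := ⟨fun h => (NeZero.ne n) (Nat.eq_zero_of_zero_dvd (h ▸ hdd))⟩
  set g := Nat.gcd e d with hg
  have hgd : g ∣ n := (Nat.gcd_dvd_left e d).trans hed
  set m := Nat.lcm e d with hm
  have hmd : m ∣ n := Nat.lcm_dvd hed hdd
  have hnm : NeZero m := ⟨fun h => (NeZero.ne n) (Nat.eq_zero_of_zero_dvd (h ▸ hmd))⟩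
  rw [factorsThrough_iff_ker_unitsMap hgd]
  rw [factorsThrough_iff_ker_unitsMap hed] at he
  rw [factorsThrough_iff_ker_unitsMap hdd] at hd
  intro u hu
  rw [MonoidHom.mem_ker] at hu
  set x := ((u : ZMod n)).val with hx
  have hcong : (1 : ℕ) ≡ x [MOD g] := by
    have : ((x : ZMod g)) = 1 := by
      have := congrArg (Units.val) hu
      rwa [ZMod.unitsMap_def, Units.coe_map, Units.val_one, MonoidHom.coe_coe,
        ZMod.castHom_apply, ← ZMod.natCast_val] at this
    have h2 : ((x : ZMod g)) = ((1:ℕ) : ZMod g) := by rw [Nat.cast_one]; exact this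
    exact ((ZMod.natCast_eq_natCast_iff _ _ _).mp h2).symm
  obtain ⟨k, hk1, hk2⟩ := Nat.chineseRemainder' hcong
  have hke : (k : ZMod e) = 1 := by
    rw [← Nat.cast_one, ZMod.natCast_eq_natCast_iff]; exact hk1
  have hkd : (k : ZMod d) = (x : ZMod d) := by
    rw [ZMod.natCast_eq_natCast_iff]; exact hk2
  have hxd : IsUnit (x : ZMod d) := by
    rw [ZMod.isUnit_iff_coprime]
    exact Nat.Coprime.coprime_dvd_right hdd (ZMod.val_coe_unit_coprime u)
  have hkm : IsUnit (k : ZMod m) := by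
    rw [ZMod.isUnit_iff_coprime]
    have h1 : Nat.Coprime k e := by
      rw [← ZMod.isUnit_iff_coprime, hke]; exact isUnit_one
    have h2 : Nat.Coprime k d := by
      rw [← ZMod.isUnit_iff_coprime, hkd]; exact hxd
    exact Nat.Coprime.coprime_dvd_right (Nat.lcm_dvd_mul e d) (h1.mul_right h2)
  obtain ⟨b, hb⟩ := ZMod.unitsMap_surjective hmd hkm.unit
  have hbval : ((ZMod.unitsMap hmd b : (ZMod m)ˣ) : ZMod m) = (k : ZMod m) := by
    rw [hb, IsUnit.unit_spec]
  have hbe : ZMod.unitsMap hed b = 1 := by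
    have : ZMod.unitsMap hed b = ZMod.unitsMap (Nat.dvd_lcm_left e d) (ZMod.unitsMap hmd b) := by
      rw [← MonoidHom.comp_apply, ZMod.unitsMap_comp]
    rw [this]
    ext
    rw [ZMod.unitsMap_def, Units.coe_map, MonoidHom.coe_coe, hbval, map_natCast, hke,
      Units.val_one]
  have hbd : ZMod.unitsMap hdd b = ZMod.unitsMap hdd u := by
    have : ZMod.unitsMap hdd b = ZMod.unitsMap (Nat.dvd_lcm_right e d) (ZMod.unitsMap hmd b) := by
      rw [← MonoidHom.comp_apply, ZMod.unitsMap_comp]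
    rw [this]
    ext
    rw [ZMod.unitsMap_def, Units.coe_map, MonoidHom.coe_coe, hbval, map_natCast, hkd,
      ZMod.unitsMap_def, Units.coe_map, MonoidHom.coe_coe, ZMod.castHom_apply,
      ← ZMod.natCast_val]
  have hsplit : u = b * (u * b⁻¹) := by
    rw [mul_comm b, mul_assoc, inv_mul_cancel, mul_one]
  rw [MonoidHom.mem_ker, hsplit, map_mul]
  have h1 : χ.toUnitHom b = 1 := he (MonoidHom.mem_ker.mpr hbe)
  have h2 : χ.toUnitHom (u * b⁻¹) = 1 := by
    refine hd (MonoidHom.mem_ker.mpr ?_)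
    rw [map_mul, map_inv, hbd, mul_inv_cancel]
  rw [h1, h2, mul_one]

lemma zc_conductor_dvd {n : ℕ} [NeZero n] (χ : DirichletCharacter ℂ n) {e : ℕ}
    (he : χ.FactorsThrough e) : χ.conductor ∣ e := by
  have hg := zc_factorsThrough_gcd χ he (factorsThrough_conductor χ)
  have h1 : χ.conductor ≤ Nat.gcd e χ.conductor := Nat.sInf_le hg
  have h2 : Nat.gcd e χ.conductor ∣ χ.conductor := Nat.gcd_dvd_right _ _
  have h3 : Nat.gcd e χ.conductor = χ.conductor :=
    le_antisymm (Nat.le_of_dvd (Nat.pos_of_ne_zero (conductor_ne_zero χ)) h2) h1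
  exact h3 ▸ Nat.gcd_dvd_left _ _

lemma zc_inner_zero {n e : ℕ} [NeZero n] [NeZero e] (χ : DirichletCharacter ℂ n) (h : e ∣ n)
    (hf : ¬ χ.FactorsThrough e) :
    ∑ a ∈ univ.filter (fun a : (ZMod n)ˣ => ZMod.unitsMap h a = 1), χ (a : ZMod n) = 0 := by
  rw [factorsThrough_iff_ker_unitsMap h] at hf
  rw [SetLike.not_le_iff_exists] at hf
  obtain ⟨b, hb1, hb2⟩ := hf
  rw [MonoidHom.mem_ker] at hb1 hb2
  have hb2' : χ ((b : ZMod n)) ≠ 1 := by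
    intro hc
    exact hb2 (Units.ext (by rwa [MulChar.coe_toUnitHom, Units.val_one]))
  set S := univ.filter (fun a : (ZMod n)ˣ => ZMod.unitsMap h a = 1) with hS
  have key : ∑ a ∈ S, χ (a : ZMod n) = χ (b : ZMod n) * ∑ a ∈ S, χ (a : ZMod n) := by
    rw [mul_sum]
    refine Finset.sum_bij' (fun a _ => a * b⁻¹) (fun a _ => a * b) ?_ ?_ ?_ ?_ ?_
    · intro a ha
      simp only [hS, mem_filter, mem_univ, true_and] at ha ⊢
      rw [map_mul, ha, map_inv, hb1, inv_one, mul_one]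
    · intro a ha
      simp only [hS, mem_filter, mem_univ, true_and] at ha ⊢
      rw [map_mul, ha, hb1, mul_one]
    · intro a _; simp [mul_assoc]
    · intro a _; simp [mul_assoc]
    · intro a _
      have hba : b * (a * b⁻¹) = a := by
        rw [mul_comm a, ← mul_assoc, mul_inv_cancel, one_mul]
      rw [← map_mul, ← Units.val_mul, hba]
  have hzero : (1 - χ (b : ZMod n)) * ∑ a ∈ S, χ (a : ZMod n) = 0 := by
    rw [sub_mul, one_mul, ← key, sub_self]
  rcases mul_eq_zero.mp hzero with h1 | h1
  · exact absurd (by linear_combination -h1) hb2'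
  · exact h1

lemma zc_inner_card {n e : ℕ} [NeZero n] [NeZero e] (χ : DirichletCharacter ℂ n) (h : e ∣ n)
    (hf : χ.FactorsThrough e) :
    ∑ a ∈ univ.filter (fun a : (ZMod n)ˣ => ZMod.unitsMap h a = 1), χ (a : ZMod n) =
      ((univ.filter (fun a : (ZMod n)ˣ => ZMod.unitsMap h a = 1)).card : ℂ) := by
  rw [factorsThrough_iff_ker_unitsMap h] at hf
  rw [Finset.sum_congr rfl (fun a ha => ?_), Finset.sum_const, nsmul_eq_mul, mul_one]
  simp only [mem_filter, mem_univ, true_and] at ha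
  have h1 := hf (MonoidHom.mem_ker.mpr ha)
  rw [MonoidHom.mem_ker] at h1
  have h2 := congrArg Units.val h1
  rwa [MulChar.coe_toUnitHom, Units.val_one] at h2

lemma zc_card_ker {n e : ℕ} [NeZero n] [NeZero e] (h : e ∣ n) :
    Nat.totient e * (univ.filter (fun a : (ZMod n)ˣ => ZMod.unitsMap h a = 1)).card
      = Nat.totient n := by
  have hcard : (univ.filter (fun a : (ZMod n)ˣ => ZMod.unitsMap h a = 1)).card
      = Nat.card (ZMod.unitsMap h).ker := by
    rw [Nat.card_eq_fintype_card, Fintype.card_subtype]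
    congr 1
    ext a
    simp [MonoidHom.mem_ker]
  have hq : Nat.card ((ZMod n)ˣ ⧸ (ZMod.unitsMap h).ker) = Nat.totient e := by
    rw [Nat.card_congr (QuotientGroup.quotientKerEquivOfSurjective _
      (ZMod.unitsMap_surjective h)).toEquiv, Nat.card_eq_fintype_card,
      ZMod.card_units_eq_totient]
  rw [hcard, ← hq, ← Subgroup.card_eq_card_quotient_mul_card_subgroup,
    Nat.card_eq_fintype_card, ZMod.card_units_eq_totient]

lemma zc_card_filter {n d : ℕ} (hn : n ≠ 0) (hd : d ∣ n) (hd0 : d ≠ 0) :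
    (n.divisors.filter (fun e => d ∣ e)).card = (n / d).divisors.card := by
  refine Finset.card_bij' (fun e _ => e / d) (fun k _ => d * k) ?_ ?_ ?_ ?_
  · intro e he
    simp only [mem_filter, Nat.mem_divisors] at he
    obtain ⟨⟨hen, _⟩, hde⟩ := he
    rw [Nat.mem_divisors]
    constructor
    · rw [Nat.dvd_div_iff_mul_dvd hd, Nat.mul_div_cancel' hde]
      exact hen
    · exact (Nat.div_ne_zero_iff_of_dvd hd).mpr ⟨hn, hd0⟩
  · intro k hk
    rw [Nat.mem_divisors] at hk
    simp only [mem_filter, Nat.mem_divisors]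
    exact ⟨⟨(Nat.dvd_div_iff_mul_dvd hd).mp hk.1, hn⟩, Dvd.intro k rfl⟩
  · intro e he
    simp only [mem_filter, Nat.mem_divisors] at he
    exact Nat.mul_div_cancel' he.2
  · intro k _
    exact Nat.mul_div_cancel_left k (Nat.pos_of_ne_zero hd0)

/-- Zhao–Cao identity: for a Dirichlet character `χ` mod `n` with conductor `d`,
`∑_{a ∈ (ℤ/nℤ)*} gcd(a-1, n) · χ(a) = φ(n) · σ₀(n/d)`. -/
theorem zhao_cao_identity (n : ℕ) [NeZero n] (χ : DirichletCharacter ℂ n) :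
    ∑ a : (ZMod n)ˣ, (Nat.gcd ((a : ZMod n) - 1).val n : ℂ) * χ a =
      (Nat.totient n * ArithmeticFunction.sigma 0 (n / χ.conductor) : ℕ) := by
  classical
  have hd0 : χ.conductor ≠ 0 := conductor_ne_zero χ
  have hdn : χ.conductor ∣ n := conductor_dvd_level χ
  have hgcd : ∀ a : (ZMod n)ˣ, (Nat.gcd ((a : ZMod n) - 1).val n : ℂ)
      = ∑ e ∈ n.divisors.filter (· ∣ ((a : ZMod n) - 1).val), (Nat.totient e : ℂ) := by
    intro a
    rw [← Nat.cast_sum]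
    congr 1
    conv_lhs => rw [← Nat.sum_totient (Nat.gcd ((a : ZMod n) - 1).val n)]
    apply Finset.sum_congr _ (fun _ _ => rfl)
    ext x
    simp only [Nat.mem_divisors, mem_filter, Nat.dvd_gcd_iff]
    constructor
    · rintro ⟨⟨h1, h2⟩, _⟩; exact ⟨⟨h2, NeZero.ne n⟩, h1⟩
    · rintro ⟨⟨h2, _⟩, h1⟩
      exact ⟨⟨h1, h2⟩, fun hc => (NeZero.ne n (Nat.eq_zero_of_gcd_eq_zero_right hc))⟩
  calc ∑ a : (ZMod n)ˣ, (Nat.gcd ((a : ZMod n) - 1).val n : ℂ) * χ a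
      = ∑ a : (ZMod n)ˣ, ∑ e ∈ n.divisors,
          (if e ∣ ((a : ZMod n) - 1).val then (Nat.totient e : ℂ) * χ a else 0) := by
        refine Finset.sum_congr rfl fun a _ => ?_
        rw [hgcd a, Finset.sum_mul, Finset.sum_filter]
    _ = ∑ e ∈ n.divisors, ∑ a : (ZMod n)ˣ,
          (if e ∣ ((a : ZMod n) - 1).val then (Nat.totient e : ℂ) * χ a else 0) :=
        Finset.sum_comm
    _ = ∑ e ∈ n.divisors, (if χ.FactorsThrough e then (Nat.totient n : ℂ) else 0) := by
        refine Finset.sum_congr rfl fun e he => ?_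
        rw [Nat.mem_divisors] at he
        have hedvd : e ∣ n := he.1
        have hene : NeZero e := ⟨fun h => he.2 (Nat.eq_zero_of_zero_dvd (h ▸ hedvd))⟩
        rw [← Finset.sum_filter]
        have hfe : univ.filter (fun a : (ZMod n)ˣ => e ∣ ((a : ZMod n) - 1).val)
            = univ.filter (fun a : (ZMod n)ˣ => ZMod.unitsMap hedvd a = 1) := by
          ext a
          simp [zc_unitsMap_eq_one_iff hedvd a]
        rw [hfe, ← Finset.mul_sum]
        by_cases hfac : χ.FactorsThrough e
        · rw [if_pos hfac, zc_inner_card χ hedvd hfac, ← Nat.cast_mul,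
            zc_card_ker hedvd]
        · rw [if_neg hfac, zc_inner_zero χ hedvd hfac, mul_zero]
    _ = ∑ e ∈ n.divisors.filter (fun e => χ.conductor ∣ e), (Nat.totient n : ℂ) := by
        rw [Finset.sum_filter]
        refine Finset.sum_congr rfl fun e he => ?_
        rw [Nat.mem_divisors] at he
        congr 1
        simp only [eq_iff_iff]
        constructor
        · exact fun hf => zc_conductor_dvd χ hf
        · intro hce
          refine ⟨he.1, changeLevel hce (factorsThrough_conductor χ).χ₀, ?_⟩
          rw [← changeLevel_trans _ hce he.1]
          exact (factorsThrough_conductor χ).eq_changeLevel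
    _ = (Nat.totient n * ArithmeticFunction.sigma 0 (n / χ.conductor) : ℕ) := by
        rw [Finset.sum_const, zc_card_filter (NeZero.ne n) hdn hd0, nsmul_eq_mul]
        rw [ArithmeticFunction.sigma_zero_apply]
        push_cast
        ring
end

section
/- Let n be a positive integer, k a non-negative integer, and χ a Dirichlet character modulo n with conductor d. Then ∑_{a ∈ (Z/nZ)*} ∑_{b₁,...,b_k ∈ Z/nZ} gcd(a-1, b₁, ..., b_k, n)·χ(a) = φ(n)·σ_k(n/d). -/
lemma unitsMap_coe {n m : ℕ} [NeZero n] (hm : m ∣ n) (u : (ZMod n)ˣ) :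
    ((ZMod.unitsMap hm u : (ZMod m)ˣ) : ZMod m) = ((u : ZMod n).val : ZMod m) := by
  rw [ZMod.unitsMap_def, Units.coe_map]
  simp [ZMod.castHom_apply, ← ZMod.natCast_val]

lemma unitsMap_eq_one_iff {n e : ℕ} [NeZero n] (he : e ∣ n) (a : (ZMod n)ˣ) :
    ZMod.unitsMap he a = 1 ↔ ((a : ZMod n).val : ZMod e) = 1 := by
  rw [Units.ext_iff, unitsMap_coe, Units.val_one]

lemma ker_split {n e f : ℕ} [NeZero n] (he : e ∣ n) (hf : f ∣ n) (a : (ZMod n)ˣ)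
    (ha : ZMod.unitsMap ((Nat.gcd_dvd_left e f).trans he) a = 1) :
    ∃ b c : (ZMod n)ˣ, a = b * c ∧ ZMod.unitsMap he b = 1 ∧ ZMod.unitsMap hf c = 1 := by
  set α := (a : ZMod n).val with hα
  rw [unitsMap_eq_one_iff] at ha
  have hmod : (1 : ℕ) ≡ α [MOD Nat.gcd e f] :=
    ((ZMod.natCast_eq_natCast_iff _ _ _).1 (by exact_mod_cast ha)).symm
  obtain ⟨k, hk1, hk2⟩ := Nat.chineseRemainder' hmod
  have hL : Nat.lcm e f ∣ n := Nat.lcm_dvd he hf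
  have hLpos : NeZero (Nat.lcm e f) := ⟨by
    have := Nat.pos_of_dvd_of_pos hL (Nat.pos_of_ne_zero (NeZero.ne n)); omega⟩
  have hkcop : k.Coprime (Nat.lcm e f) := by
    have h1 : k.Coprime e := by
      have := (Nat.ModEq.gcd_eq hk1)
      simpa [Nat.Coprime, Nat.gcd_one_left] using this
    have h2 : k.Coprime f := by
      have := (Nat.ModEq.gcd_eq hk2)
      have hcf : α.Coprime f := Nat.Coprime.coprime_dvd_right hf (ZMod.val_coe_unit_coprime a)
      simpa [Nat.Coprime, hcf] using this
    exact Nat.Coprime.coprime_dvd_right (Nat.lcm_dvd (dvd_mul_right e f) (dvd_mul_left f e))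
      (Nat.Coprime.mul_right h1 h2)
  have hU : IsUnit ((k : ℕ) : ZMod (Nat.lcm e f)) := (ZMod.isUnit_iff_coprime k _).2 hkcop
  obtain ⟨b, hb⟩ := ZMod.unitsMap_surjective hL hU.unit
  -- key: for any m ∣ lcm, coe of unitsMap m b = (k : ZMod m)
  have key : ∀ (m : ℕ) (hm : m ∣ Nat.lcm e f),
      ((ZMod.unitsMap (hm.trans hL) b : (ZMod m)ˣ) : ZMod m) = (k : ZMod m) := by
    intro m hm
    have : ZMod.unitsMap (hm.trans hL) b = ZMod.unitsMap hm (ZMod.unitsMap hL b) := by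
      rw [← MonoidHom.comp_apply, ZMod.unitsMap_comp]
    rw [this, hb, unitsMap_coe]
    have h1 : ((hU.unit : (ZMod (Nat.lcm e f))ˣ) : ZMod (Nat.lcm e f)) = (k : ZMod _) :=
      hU.unit_spec
    rw [h1, ZMod.val_natCast]
    exact (ZMod.natCast_eq_natCast_iff _ _ _).2 ((Nat.mod_modEq k _).of_dvd hm)
  refine ⟨b, b⁻¹ * a, by group, ?_, ?_⟩
  · rw [Units.ext_iff]
    have := key e (Nat.dvd_lcm_left e f)
    rw [show he = (Nat.dvd_lcm_left e f).trans hL from rfl] at *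
    rw [this, Units.val_one]
    exact_mod_cast (ZMod.natCast_eq_natCast_iff _ _ _).2 hk1
  · have hbf : ZMod.unitsMap hf b = ZMod.unitsMap hf a := by
      rw [Units.ext_iff]
      have := key f (Nat.dvd_lcm_right e f)
      rw [show hf = (Nat.dvd_lcm_right e f).trans hL from rfl] at *
      rw [this, unitsMap_coe]
      exact ((ZMod.natCast_eq_natCast_iff _ _ _).2 hk2)
    rw [map_mul, map_inv, hbf, inv_mul_cancel]

open DirichletCharacter in
lemma factorsThrough_gcd {n e f : ℕ} [NeZero n] (χ : DirichletCharacter ℂ n)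
    (he : χ.FactorsThrough e) (hf : χ.FactorsThrough f) :
    χ.FactorsThrough (Nat.gcd e f) := by
  rw [factorsThrough_iff_ker_unitsMap ((Nat.gcd_dvd_left e f).trans he.dvd)]
  intro a ha
  obtain ⟨b, c, rfl, hb, hc⟩ := ker_split he.dvd hf.dvd a ha
  have h1 := (factorsThrough_iff_ker_unitsMap he.dvd).1 he hb
  have h2 := (factorsThrough_iff_ker_unitsMap hf.dvd).1 hf hc
  rw [MonoidHom.mem_ker] at *
  rw [map_mul, h1, h2, mul_one]

open DirichletCharacter in
lemma conductor_dvd_of_factorsThrough {n e : ℕ} [NeZero n] (χ : DirichletCharacter ℂ n)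
    (h : χ.FactorsThrough e) : χ.conductor ∣ e := by
  have hg : χ.FactorsThrough (Nat.gcd χ.conductor e) :=
    factorsThrough_gcd χ (factorsThrough_conductor χ) h
  have h1 : χ.conductor ≤ Nat.gcd χ.conductor e :=
    Nat.sInf_le hg
  have h2 : Nat.gcd χ.conductor e ∣ χ.conductor := Nat.gcd_dvd_left _ _
  have hne : χ.conductor ≠ 0 := conductor_ne_zero χ
  have : Nat.gcd χ.conductor e = χ.conductor :=
    le_antisymm (Nat.le_of_dvd (Nat.pos_of_ne_zero hne) h2) h1
  rw [← this]; exact Nat.gcd_dvd_right _ _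

open DirichletCharacter Finset in
lemma char_sum_ker {n e : ℕ} [NeZero n] (χ : DirichletCharacter ℂ n) (he : e ∣ n) :
    ∑ a : (ZMod n)ˣ, (if ZMod.unitsMap he a = 1 then χ a else 0) =
      if χ.conductor ∣ e then ((Nat.totient n / Nat.totient e : ℕ) : ℂ) else 0 := by
  have hne : NeZero e := ⟨fun h => NeZero.ne n (by simpa [h] using he)⟩
  by_cases hde : χ.conductor ∣ e
  · rw [if_pos hde]
    have hft : χ.FactorsThrough e := by
      refine ⟨he, changeLevel hde (factorsThrough_conductor χ).χ₀, ?_⟩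
      rw [← changeLevel_trans _ hde he]
      exact (factorsThrough_conductor χ).eq_changeLevel
    have hker := (factorsThrough_iff_ker_unitsMap he).1 hft
    have hone : ∀ a : (ZMod n)ˣ, ZMod.unitsMap he a = 1 → χ a = 1 := by
      intro a ha
      have : χ.toUnitHom a = 1 := hker ha
      rw [← MulChar.coe_toUnitHom, this, Units.val_one]
    have hcard : Fintype.card {a : (ZMod n)ˣ // ZMod.unitsMap he a = 1} =
        Nat.totient n / Nat.totient e := by
      have h1 : (ZMod.unitsMap he).ker.index = Nat.totient e := by
        rw [Subgroup.index_ker, MonoidHom.range_eq_top.2 (ZMod.unitsMap_surjective he)]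
        rw [show Nat.card ((⊤ : Subgroup (ZMod e)ˣ)) = Nat.card (ZMod e)ˣ from
          Nat.card_congr Subgroup.topEquiv.toEquiv, Nat.card_eq_fintype_card,
          ZMod.card_units_eq_totient e]
      have h2 := Subgroup.card_mul_index (ZMod.unitsMap he).ker
      rw [h1] at h2
      simp only [Nat.card_eq_fintype_card, ZMod.card_units_eq_totient n] at h2
      have : Fintype.card {a : (ZMod n)ˣ // ZMod.unitsMap he a = 1} =
          Fintype.card (ZMod.unitsMap he).ker := by
        apply Fintype.card_congr
        exact Equiv.subtypeEquivRight (fun a => by simp [MonoidHom.mem_ker])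
      have hdiv : Nat.totient n / Nat.totient e = Fintype.card (ZMod.unitsMap he).ker :=
        Nat.div_eq_of_eq_mul_left (Nat.totient_pos.2 (Nat.pos_of_ne_zero (NeZero.ne e))) h2.symm
      rw [this, ← hdiv]
    calc ∑ a : (ZMod n)ˣ, (if ZMod.unitsMap he a = 1 then χ a else 0)
        = ∑ a : (ZMod n)ˣ, (if ZMod.unitsMap he a = 1 then (1:ℂ) else 0) := by
          refine Finset.sum_congr rfl fun a _ => ?_
          split_ifs with h
          · exact hone a h
          · rfl
      _ = ((Finset.univ.filter fun a : (ZMod n)ˣ => ZMod.unitsMap he a = 1).card : ℂ) := by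
          rw [Finset.sum_boole]
      _ = ((Nat.totient n / Nat.totient e : ℕ) : ℂ) := by
          rw [← hcard, Fintype.card_subtype]
  · rw [if_neg hde]
    have hnft : ¬ χ.FactorsThrough e := fun h => hde (conductor_dvd_of_factorsThrough χ h)
    rw [factorsThrough_iff_ker_unitsMap he] at hnft
    obtain ⟨u, hu1, hu2⟩ := SetLike.not_le_iff_exists.1 hnft
    rw [MonoidHom.mem_ker] at hu1 hu2
    set S := ∑ a : (ZMod n)ˣ, (if ZMod.unitsMap he a = 1 then χ a else 0) with hS
    have hmul : χ u * S = S := by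
      rw [hS, Finset.mul_sum]
      rw [← Equiv.sum_comp (Equiv.mulLeft u) fun a => (if ZMod.unitsMap he a = 1 then χ a else 0)]
      refine Finset.sum_congr rfl fun a _ => ?_
      simp only [Equiv.coe_mulLeft, map_mul, hu1, one_mul, Units.val_mul]
      split_ifs with h
      · ring
      · ring
    have hne1 : (χ u : ℂ) ≠ 1 := by
      rw [← MulChar.coe_toUnitHom]
      intro h
      exact hu2 (Units.ext (by simpa using h))
    have hz : (χ u - 1) * S = 0 := by linear_combination hmul
    rcases mul_eq_zero.1 hz with h | h
    · exact absurd (sub_eq_zero.1 h) hne1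
    · exact h

lemma gcd_expand {n : ℕ} (hn : n ≠ 0) (x G : ℕ) :
    Nat.gcd x (Nat.gcd G n) = ∑ e ∈ n.divisors, if e ∣ x ∧ e ∣ G then Nat.totient e else 0 := by
  have hm : Nat.gcd x (Nat.gcd G n) ≠ 0 := by
    simp only [ne_eq, Nat.gcd_eq_zero_iff, not_and_or]
    tauto
  conv_lhs => rw [← Nat.sum_totient (Nat.gcd x (Nat.gcd G n))]
  rw [← Finset.sum_filter]
  congr 1
  ext e
  simp only [Nat.mem_divisors, Finset.mem_filter, Nat.dvd_gcd_iff]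
  constructor
  · rintro ⟨⟨h1, h2, h3⟩, -⟩; exact ⟨⟨h3, hn⟩, h1, h2⟩
  · rintro ⟨⟨h3, -⟩, h1, h2⟩; exact ⟨⟨h1, h2, h3⟩, hm⟩

lemma card_dvd_val {n e : ℕ} [NeZero n] (he : e ∣ n) (hep : e ≠ 0) :
    (Finset.univ.filter fun x : ZMod n => e ∣ x.val).card = n / e := by
  have hn : n ≠ 0 := NeZero.ne n
  rw [← Finset.card_range (n / e)]
  apply Finset.card_bij' (fun x _ => x.val / e) (fun j _ => ((e * j : ℕ) : ZMod n))
  · intro x hx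
    rw [Finset.mem_filter] at hx
    rw [Finset.mem_range]
    exact Nat.div_lt_div_of_lt_of_dvd he (ZMod.val_lt x)
  · intro j hj
    rw [Finset.mem_range] at hj
    rw [Finset.mem_filter]
    have hlt : e * j < n := by
      calc e * j < e * (n / e) := (Nat.mul_lt_mul_left (Nat.pos_of_ne_zero hep)).2 hj
        _ = n := Nat.mul_div_cancel' he
    refine ⟨Finset.mem_univ _, ?_⟩
    rw [ZMod.val_cast_of_lt hlt]
    exact dvd_mul_right e j
  · intro x hx
    rw [Finset.mem_filter] at hx
    rw [Nat.mul_div_cancel' hx.2]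
    exact ZMod.natCast_rightInverse x
  · intro j hj
    rw [Finset.mem_range] at hj
    have hlt : e * j < n := by
      calc e * j < e * (n / e) := (Nat.mul_lt_mul_left (Nat.pos_of_ne_zero hep)).2 hj
        _ = n := Nat.mul_div_cancel' he
    rw [ZMod.val_cast_of_lt hlt, Nat.mul_div_cancel_left j (Nat.pos_of_ne_zero hep)]

lemma count_b {n e : ℕ} [NeZero n] (he : e ∣ n) (hep : e ≠ 0) (k : ℕ) :
    ∑ b : Fin k → ZMod n, (if ∀ i, e ∣ (b i).val then (1 : ℂ) else 0) =
      ((n / e : ℕ) : ℂ) ^ k := by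
  rw [Finset.sum_boole]
  rw [← Fintype.card_subtype]
  have : Fintype.card {b : Fin k → ZMod n // ∀ i, e ∣ (b i).val} =
      Fintype.card (Fin k → {x : ZMod n // e ∣ x.val}) :=
    Fintype.card_congr (Equiv.subtypePiEquivPi (p := fun (_ : Fin k) (x : ZMod n) => e ∣ x.val))
  rw [this, Fintype.card_pi]
  have hc : Fintype.card {x : ZMod n // e ∣ x.val} = n / e := by
    rw [Fintype.card_subtype, card_dvd_val he hep]
  simp [hc]

lemma sum_filter_dvd (n d k : ℕ) (hd : d ∣ n) (hn : n ≠ 0) :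
    ∑ e ∈ n.divisors.filter (fun e => d ∣ e), (n / e) ^ k =
      ArithmeticFunction.sigma k (n / d) := by
  have hd0 : d ≠ 0 := fun h => hn (by simpa [h] using hd)
  rw [ArithmeticFunction.sigma_apply, ← Nat.sum_div_divisors (n / d) (fun f => f ^ k)]
  apply Finset.sum_nbij' (fun e => e / d) (fun f => d * f)
  · intro e he
    simp only [Finset.mem_filter, Nat.mem_divisors] at he
    obtain ⟨⟨he1, -⟩, he2⟩ := he
    rw [Nat.mem_divisors]
    refine ⟨(Nat.dvd_div_iff_mul_dvd hd).2 ?_, by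
      simp [Nat.div_ne_zero_iff, hd0, Nat.le_of_dvd (Nat.pos_of_ne_zero hn) hd]⟩
    rw [Nat.mul_div_cancel' he2]
    exact he1
  · intro f hf
    rw [Nat.mem_divisors] at hf
    simp only [Finset.mem_filter, Nat.mem_divisors]
    exact ⟨⟨(Nat.dvd_div_iff_mul_dvd hd).1 hf.1, hn⟩, dvd_mul_right d f⟩
  · intro e he
    simp only [Finset.mem_filter] at he
    exact Nat.mul_div_cancel' he.2
  · intro f hf
    exact Nat.mul_div_cancel_left f (Nat.pos_of_ne_zero hd0)
  · intro e he
    simp only [Finset.mem_filter, Nat.mem_divisors] at he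
    have hx : n / d / (e / d) = n / e := by
      rw [Nat.div_div_eq_div_mul, Nat.mul_div_cancel' he.2]
    rw [hx]

lemma dvd_val_sub_one_iff {n e : ℕ} [NeZero n] (he : e ∣ n) (hep : e ≠ 0) (a : (ZMod n)ˣ) :
    e ∣ ((a : ZMod n) - 1).val ↔ ZMod.unitsMap he a = 1 := by
  have : NeZero e := ⟨hep⟩
  rw [unitsMap_eq_one_iff he]
  have h1 : ((((a : ZMod n) - 1).val : ℕ) : ZMod e) = (((a : ZMod n).val : ℕ) : ZMod e) - 1 := by
    have h2 : (((1 : ZMod n).val : ℕ) : ZMod e) = 1 := by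
      rw [ZMod.val_one_eq_one_mod]
      have h3 : (1 % n) ≡ 1 [MOD e] := (Nat.mod_modEq 1 n).of_dvd he
      exact_mod_cast (ZMod.natCast_eq_natCast_iff _ _ _).2 h3
    have := map_sub (ZMod.castHom he (ZMod e)) (a : ZMod n) 1
    simpa [ZMod.castHom_apply, ← ZMod.natCast_val, h2] using this
  rw [← ZMod.natCast_eq_zero_iff _ e, h1, sub_eq_zero]

/-- Main theorem: for a Dirichlet character `χ` mod `n` with conductor `d` and `k ≥ 0`,
`∑_{a ∈ (ℤ/nℤ)*, b₁,…,b_k ∈ ℤ/nℤ} gcd(a-1, b₁, …, b_k, n) · χ(a) = φ(n)·σ_k(n/d)`. -/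
theorem menon_dirichlet_identity (n k : ℕ) [NeZero n] (χ : DirichletCharacter ℂ n) :
    ∑ a : (ZMod n)ˣ, ∑ b : Fin k → ZMod n,
      (Nat.gcd ((a : ZMod n) - 1).val
        (Nat.gcd (Finset.univ.gcd fun i => (b i).val) n) : ℂ) * χ a =
      (Nat.totient n * ArithmeticFunction.sigma k (n / χ.conductor) : ℕ) := by
  classical
  have hn : n ≠ 0 := NeZero.ne n
  have hd : χ.conductor ∣ n := χ.conductor_dvd_level
  have key : ∀ a : (ZMod n)ˣ,
      (∑ b : Fin k → ZMod n, (Nat.gcd ((a : ZMod n) - 1).val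
        (Nat.gcd (Finset.univ.gcd fun i => (b i).val) n) : ℂ) * χ a) =
      ∑ e ∈ n.divisors,
        (if e ∣ ((a : ZMod n) - 1).val then χ a * (Nat.totient e : ℂ) else 0) *
          ((n / e : ℕ) : ℂ) ^ k := by
    intro a
    have hb : ∀ b : Fin k → ZMod n,
        (Nat.gcd ((a : ZMod n) - 1).val
          (Nat.gcd (Finset.univ.gcd fun i => (b i).val) n) : ℂ) * χ a =
        ∑ e ∈ n.divisors,
          (if e ∣ ((a : ZMod n) - 1).val then χ a * (Nat.totient e : ℂ) else 0) *
            (if ∀ i, e ∣ (b i).val then (1 : ℂ) else 0) := by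
      intro b
      rw [gcd_expand hn ((a : ZMod n) - 1).val (Finset.univ.gcd fun i => (b i).val)]
      push_cast [apply_ite (Nat.cast : ℕ → ℂ)]
      rw [Finset.sum_mul]
      refine Finset.sum_congr rfl fun e he => ?_
      have hQ : e ∣ Finset.univ.gcd (fun i => (b i).val) ↔ ∀ i, e ∣ (b i).val := by
        rw [Finset.dvd_gcd_iff]; simp
      by_cases h1 : e ∣ ((a : ZMod n) - 1).val <;> by_cases h2 : ∀ i, e ∣ (b i).val <;>
        simp [h1, h2, hQ] <;> ring
    rw [Finset.sum_congr rfl fun b _ => hb b, Finset.sum_comm]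
    refine Finset.sum_congr rfl fun e he => ?_
    obtain ⟨hedvd, -⟩ := Nat.mem_divisors.1 he
    have hep : e ≠ 0 := fun h => hn (by simpa [h] using hedvd)
    rw [← Finset.mul_sum, count_b hedvd hep k]
  rw [Finset.sum_congr rfl fun a _ => key a, Finset.sum_comm]
  have step2 : ∀ e ∈ n.divisors,
      (∑ a : (ZMod n)ˣ,
        (if e ∣ ((a : ZMod n) - 1).val then χ a * (Nat.totient e : ℂ) else 0) *
          ((n / e : ℕ) : ℂ) ^ k) =
      (if χ.conductor ∣ e then ((Nat.totient n : ℕ) : ℂ) else 0) * ((n / e : ℕ) : ℂ) ^ k := by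
    intro e he
    obtain ⟨hedvd, -⟩ := Nat.mem_divisors.1 he
    have hep : e ≠ 0 := fun h => hn (by simpa [h] using hedvd)
    rw [← Finset.sum_mul]
    congr 1
    have : ∀ a : (ZMod n)ˣ,
        (if e ∣ ((a : ZMod n) - 1).val then χ a * (Nat.totient e : ℂ) else 0) =
        (if ZMod.unitsMap hedvd a = 1 then χ a else 0) * (Nat.totient e : ℂ) := by
      intro a
      simp only [dvd_val_sub_one_iff hedvd hep]
      split_ifs <;> ring
    rw [Finset.sum_congr rfl fun a _ => this a, ← Finset.sum_mul, char_sum_ker χ hedvd]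
    split_ifs with h
    · rw [← Nat.cast_mul, Nat.div_mul_cancel (Nat.totient_dvd_of_dvd hedvd)]
    · ring
  rw [Finset.sum_congr rfl step2]
  have : ∀ e ∈ n.divisors,
      (if χ.conductor ∣ e then ((Nat.totient n : ℕ) : ℂ) else 0) * ((n / e : ℕ) : ℂ) ^ k =
      (if χ.conductor ∣ e then ((Nat.totient n : ℕ) : ℂ) * ((n / e : ℕ) : ℂ) ^ k else 0) := by
    intro e _; split_ifs <;> ring
  rw [Finset.sum_congr rfl this, ← Finset.sum_filter]
  have : ∑ e ∈ n.divisors.filter (fun e => χ.conductor ∣ e),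
      ((Nat.totient n : ℕ) : ℂ) * ((n / e : ℕ) : ℂ) ^ k =
      ((Nat.totient n * ∑ e ∈ n.divisors.filter (fun e => χ.conductor ∣ e), (n / e) ^ k : ℕ) : ℂ)
      := by
    push_cast
    rw [Finset.mul_sum]
  rw [this, sum_filter_dvd n χ.conductor k hd hn]
end

section
/- Let p be a prime, m ≥ 1, n = p^m, and χ a Dirichlet character modulo n with conductor p^t (0 ≤ t ≤ m). For any integer s with 0 ≤ s ≤ m, ∑_{a ∈ (Z/nZ)*} gcd(a-1, p^s)·χ(a) equals (s - t + 1)·(p^m - p^{m-1}) if s ≥ t, and 0 if s < t. -/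
open Finset

/-- Expansion of `gcd x (p^s)` as a sum of totients over divisibility conditions. -/
private lemma gcd_pow_eq_sum_totient {p : ℕ} (hp : p.Prime) (x s : ℕ) :
    Nat.gcd x (p ^ s) =
      ∑ k ∈ Finset.range (s + 1), if p ^ k ∣ x then Nat.totient (p ^ k) else 0 := by
  induction s with
  | zero => simp
  | succ s ih =>
    rw [Finset.sum_range_succ, ← ih]
    by_cases h : p ^ (s + 1) ∣ x
    · have h' : p ^ s ∣ x := dvd_trans (pow_dvd_pow p (Nat.le_succ s)) h
      rw [if_pos h, Nat.gcd_eq_right h, Nat.gcd_eq_right h',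
        Nat.totient_prime_pow hp (Nat.succ_pos s)]
      simp only [Nat.succ_sub_one]
      have h6 : p ^ s * (p - 1) = p ^ (s + 1) - p ^ s := by
        rw [Nat.mul_sub, mul_one, ← pow_succ]
      have h7 : p ^ s ≤ p ^ (s + 1) := Nat.pow_le_pow_right hp.pos (Nat.le_succ s)
      omega
    · rw [if_neg h, add_zero]
      refine Nat.dvd_antisymm ?_ (Nat.dvd_gcd (Nat.gcd_dvd_left _ _)
        (dvd_trans (Nat.gcd_dvd_right _ _) (pow_dvd_pow p (Nat.le_succ s))))
      refine Nat.dvd_gcd (Nat.gcd_dvd_left _ _) ?_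
      obtain ⟨j, hj, hje⟩ := (Nat.dvd_prime_pow hp).mp (Nat.gcd_dvd_right x (p ^ (s + 1)))
      have hjs : j ≤ s := by
        rcases Nat.lt_or_ge j (s + 1) with h1 | h1
        · omega
        · exfalso
          have : j = s + 1 := le_antisymm hj h1
          subst this
          exact h (hje ▸ Nat.gcd_dvd_left x (p ^ (s + 1)))
      exact hje ▸ pow_dvd_pow p hjs
/-- Sum of a character over a subgroup. -/
private lemma sum_subgroup_eq {G : Type*} [CommGroup G] [Fintype G] (H : Subgroup G)
    [DecidablePred (· ∈ H)] (φ : G →* ℂˣ) [Decidable (H ≤ φ.ker)] :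
    ∑ a : G, (if a ∈ H then (φ a : ℂ) else 0) =
      if H ≤ φ.ker then (Nat.card H : ℂ) else 0 := by
  have hrw : ∑ a : G, (if a ∈ H then (φ a : ℂ) else 0)
      = ∑ h : H, ((φ h : ℂ)) := by
    rw [← Finset.sum_filter]
    exact Finset.sum_subtype (Finset.univ.filter (· ∈ H)) (by simp) (fun a => (φ a : ℂ))
  rw [hrw]
  split_ifs with hle
  · have : ∀ h : H, ((φ h : ℂ)) = 1 := fun h => by
      have := hle h.2
      rw [MonoidHom.mem_ker] at this
      simp [this]
    simp [this, Nat.card_eq_fintype_card]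
  · obtain ⟨b, hbH, hb⟩ := SetLike.not_le_iff_exists.mp hle
    rw [MonoidHom.mem_ker] at hb
    set S := ∑ h : H, ((φ h : ℂ)) with hS
    have key : (φ b : ℂ) * S = S := by
      rw [hS, Finset.mul_sum]
      let e : H ≃ H := Equiv.mulLeft (⟨b, hbH⟩ : H)
      rw [← Equiv.sum_comp e (fun h : H => ((φ h : ℂ)))]
      refine Finset.sum_congr rfl fun h _ => ?_
      show (φ b : ℂ) * (φ (h : G) : ℂ) = (φ (b * (h : G)) : ℂ)
      rw [map_mul, Units.val_mul]
    have hz : ((φ b : ℂ) - 1) * S = 0 := by rw [sub_mul, one_mul, key, sub_self]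
    rcases mul_eq_zero.mp hz with h | h
    · exact absurd (Units.ext (by rw [sub_eq_zero] at h; simpa using h)) hb
    · exact h

/-- For `n = p^m`, `χ` a Dirichlet character mod `n` with conductor `p^t`, and `0 ≤ s ≤ m`:
`∑_{a ∈ (ℤ/nℤ)*} gcd(a-1, p^s) χ(a)` equals `(s-t+1)(p^m - p^(m-1))` if `s ≥ t`, else `0`. -/
theorem gcd_char_sum_prime_power (p m t s : ℕ) [Fact p.Prime] (hm : 1 ≤ m)
    (χ : DirichletCharacter ℂ (p ^ m)) (ht : χ.conductor = p ^ t) (htm : t ≤ m)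
    (hsm : s ≤ m) :
    (t ≤ s → ∑ a : (ZMod (p ^ m))ˣ,
        (Nat.gcd ((a : ZMod (p ^ m)) - 1).val (p ^ s) : ℂ) * χ a =
      ((s - t + 1) * (p ^ m - p ^ (m - 1)) : ℕ)) ∧
    (s < t → ∑ a : (ZMod (p ^ m))ˣ,
        (Nat.gcd ((a : ZMod (p ^ m)) - 1).val (p ^ s) : ℂ) * χ a = 0) := by
  classical
  have hp : p.Prime := Fact.out
  haveI : NeZero (p ^ m) := ⟨pow_ne_zero m hp.ne_zero⟩
  -- key computation for each k ≤ m
  have key : ∀ k, k ≤ m →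
      (Nat.totient (p ^ k) : ℂ) *
        (∑ a : (ZMod (p ^ m))ˣ, if p ^ k ∣ ((a : ZMod (p ^ m)) - 1).val then χ a else 0)
      = if t ≤ k then ((p ^ m - p ^ (m - 1) : ℕ) : ℂ) else 0 := by
    intro k hk
    have hdvd : p ^ k ∣ p ^ m := pow_dvd_pow p hk
    haveI : NeZero (p ^ k) := ⟨pow_ne_zero k hp.ne_zero⟩
    set f : (ZMod (p ^ m))ˣ →* (ZMod (p ^ k))ˣ := ZMod.unitsMap hdvd with hf
    -- rewrite the divisibility condition as membership in ker f
    have hcond : ∀ a : (ZMod (p ^ m))ˣ,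
        (p ^ k ∣ ((a : ZMod (p ^ m)) - 1).val) ↔ a ∈ f.ker := by
      intro a
      rw [← ZMod.natCast_eq_zero_iff _ (p ^ k)]
      rw [ZMod.natCast_val]
      rw [show (ZMod.cast ((a : ZMod (p ^ m)) - 1) : ZMod (p ^ k))
          = ZMod.castHom hdvd (ZMod (p ^ k)) ((a : ZMod (p ^ m)) - 1) from rfl]
      rw [map_sub, map_one, sub_eq_zero]
      rw [MonoidHom.mem_ker]
      constructor
      · intro h
        ext
        rw [hf, ZMod.unitsMap_def]
        simpa using h
      · intro h
        have := congrArg (fun u : (ZMod (p ^ k))ˣ => (u : ZMod (p ^ k))) h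
        rw [hf, ZMod.unitsMap_def] at this
        simpa using this
    have hrw : ∀ a : (ZMod (p ^ m))ˣ,
        (if p ^ k ∣ ((a : ZMod (p ^ m)) - 1).val then χ a else 0)
        = (if a ∈ f.ker then ((χ.toUnitHom a : ℂ)) else 0) := by
      intro a
      rw [if_congr (hcond a) rfl rfl, MulChar.coe_toUnitHom]
    rw [Finset.sum_congr rfl (fun a _ => hrw a)]
    rw [sum_subgroup_eq f.ker χ.toUnitHom]
    -- the triviality condition is equivalent to t ≤ k
    have hiff : (f.ker ≤ χ.toUnitHom.ker) ↔ t ≤ k := by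
      rw [← DirichletCharacter.factorsThrough_iff_ker_unitsMap hdvd]
      constructor
      · intro hFT
        have hle : χ.conductor ≤ p ^ k :=
          Nat.sInf_le ((DirichletCharacter.mem_conductorSet_iff χ).mpr hFT)
        rw [ht] at hle
        exact (Nat.pow_le_pow_iff_right hp.one_lt).mp hle
      · intro htk
        have hFTt : χ.FactorsThrough (p ^ t) := by
          have := DirichletCharacter.factorsThrough_conductor χ
          rwa [ht] at this
        obtain ⟨hd, χ₀, hχ₀⟩ := hFTt
        refine ⟨hdvd, DirichletCharacter.changeLevel (pow_dvd_pow p htk) χ₀, ?_⟩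
        rw [← DirichletCharacter.changeLevel_trans]
        rw [hχ₀]
    rw [if_congr hiff rfl rfl]
    split_ifs with htk
    · -- compute the cardinality of the kernel
      have hsurj : Function.Surjective f := ZMod.unitsMap_surjective hdvd
      have hcard : Nat.card (ZMod (p ^ m))ˣ = Nat.card (ZMod (p ^ k))ˣ * Nat.card f.ker := by
        rw [Subgroup.card_eq_card_quotient_mul_card_subgroup f.ker]
        congr 1
        exact Nat.card_congr (QuotientGroup.quotientKerEquivOfSurjective f hsurj).toEquiv
      have hckey : Nat.totient (p ^ k) * Nat.card f.ker = p ^ m - p ^ (m - 1) := by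
        have h1 : Nat.card (ZMod (p ^ m))ˣ = Nat.totient (p ^ m) := by
          rw [Nat.card_eq_fintype_card, ZMod.card_units_eq_totient]
        have h2 : Nat.card (ZMod (p ^ k))ˣ = Nat.totient (p ^ k) := by
          rw [Nat.card_eq_fintype_card, ZMod.card_units_eq_totient]
        rw [h1, h2] at hcard
        have hmm : m - 1 + 1 = m := Nat.succ_pred_eq_of_pos hm
        have h3 : Nat.totient (p ^ m) = p ^ m - p ^ (m - 1) := by
          rw [Nat.totient_prime_pow hp hm, Nat.mul_sub, mul_one, ← pow_succ, hmm]
        rw [← hcard, h3]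
      rw [← hckey]
      push_cast
      ring
    · ring
  -- main computation
  have main : ∑ a : (ZMod (p ^ m))ˣ,
      (Nat.gcd ((a : ZMod (p ^ m)) - 1).val (p ^ s) : ℂ) * χ a
      = ∑ k ∈ Finset.range (s + 1),
          (if t ≤ k then ((p ^ m - p ^ (m - 1) : ℕ) : ℂ) else 0) := by
    have step1 : ∀ a : (ZMod (p ^ m))ˣ,
        (Nat.gcd ((a : ZMod (p ^ m)) - 1).val (p ^ s) : ℂ) * χ a
        = ∑ k ∈ Finset.range (s + 1),
            (Nat.totient (p ^ k) : ℂ) *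
              (if p ^ k ∣ ((a : ZMod (p ^ m)) - 1).val then χ a else 0) := by
      intro a
      rw [gcd_pow_eq_sum_totient hp]
      push_cast
      rw [Finset.sum_mul]
      refine Finset.sum_congr rfl fun k _ => ?_
      split_ifs <;> simp
    rw [Finset.sum_congr rfl (fun a _ => step1 a), Finset.sum_comm]
    refine Finset.sum_congr rfl fun k hk => ?_
    rw [← Finset.mul_sum]
    exact key k (le_trans (Nat.lt_succ_iff.mp (Finset.mem_range.mp hk)) hsm)
  constructor
  · intro hts
    rw [main]
    have hfilter : Finset.filter (fun k => t ≤ k) (Finset.range (s + 1)) = Finset.Ico t (s + 1) := by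
      ext k
      simp only [Finset.mem_filter, Finset.mem_range, Finset.mem_Ico]
      omega
    rw [← Finset.sum_filter, hfilter, Finset.sum_const, Nat.card_Ico, nsmul_eq_mul]
    have : s + 1 - t = s - t + 1 := by omega
    rw [this]
    push_cast
    ring
  · intro hst
    rw [main]
    refine Finset.sum_eq_zero fun k hk => ?_
    rw [if_neg]
    have := Finset.mem_range.mp hk
    omega
end

section
/- Let n = n₁·n₂ with gcd(n₁, n₂) = 1, and let χ be a Dirichlet character modulo n, written χ = χ₁·χ₂ with χᵢ a Dirichlet character modulo nᵢ (via the Chinese remainder theorem). Define S_χ(n,k) = ∑_{a ∈ (Z/nZ)*} ∑_{b₁,...,b_k ∈ Z/nZ} gcd(a-1, b₁, ..., b_k, n)·χ(a). Then S_χ(n,k) = S_{χ₁}(n₁,k)·S_{χ₂}(n₂,k). -/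
private lemma gcd_coprime_mul {m n : ℕ} (h : Nat.Coprime m n) (c : ℕ) :
    Nat.gcd c (m * n) = Nat.gcd c m * Nat.gcd c n := by
  refine Nat.dvd_antisymm (gcd_mul_dvd_mul_gcd c m n) ?_
  have h1 : Nat.Coprime (Nat.gcd c m) (Nat.gcd c n) :=
    Nat.Coprime.coprime_dvd_left (Nat.gcd_dvd_right c m)
      (Nat.Coprime.coprime_dvd_right (Nat.gcd_dvd_right c n) h)
  exact Nat.dvd_gcd (h1.mul_dvd_of_dvd_of_dvd (Nat.gcd_dvd_left c m) (Nat.gcd_dvd_left c n))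
    (mul_dvd_mul (Nat.gcd_dvd_right c m) (Nat.gcd_dvd_right c n))

private lemma gcd_congr_mod {n a b : ℕ} (h : a % n = b % n) {m : ℕ} (hm : m ∣ n) :
    Nat.gcd a m = Nat.gcd b m :=
  Nat.ModEq.gcd_eq (Nat.ModEq.of_dvd hm h)

private lemma finsetgcd_mod {ι : Type*} (s : Finset ι) (f g : ι → ℕ) (n : ℕ)
    (h : ∀ i ∈ s, f i % n = g i % n) :
    Nat.gcd (s.gcd f) n = Nat.gcd (s.gcd g) n := by
  classical
  induction s using Finset.induction_on with
  | empty => rfl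
  | @insert a s ha ih =>
    rw [Finset.gcd_insert, Finset.gcd_insert]
    show Nat.gcd (Nat.gcd (f a) (s.gcd f)) n = Nat.gcd (Nat.gcd (g a) (s.gcd g)) n
    rw [Nat.gcd_assoc, Nat.gcd_assoc,
      ih (fun i hi => h i (Finset.mem_insert_of_mem hi)),
      gcd_congr_mod (h a (Finset.mem_insert_self a s)) (Nat.gcd_dvd_right (s.gcd g) n)]

private lemma key_gcd {n₁ n₂ : ℕ} (h : Nat.Coprime n₁ n₂) (v : ℕ) {ι : Type*}
    (s : Finset ι) (f : ι → ℕ) :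
    Nat.gcd v (Nat.gcd (s.gcd f) (n₁ * n₂)) =
      Nat.gcd (v % n₁) (Nat.gcd (s.gcd fun i => f i % n₁) n₁) *
      Nat.gcd (v % n₂) (Nat.gcd (s.gcd fun i => f i % n₂) n₂) := by
  have e₁ : ∀ n : ℕ, Nat.gcd (s.gcd fun i => f i % n) n = Nat.gcd (s.gcd f) n :=
    fun n => finsetgcd_mod s _ f n (fun i _ => Nat.mod_mod_of_dvd (f i) dvd_rfl)
  rw [e₁ n₁, e₁ n₂, ← Nat.gcd_assoc, gcd_coprime_mul h, Nat.gcd_assoc, Nat.gcd_assoc,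
    gcd_congr_mod (a := v % n₁) (Nat.mod_mod_of_dvd v dvd_rfl)
      (Nat.gcd_dvd_right (s.gcd f) n₁),
    gcd_congr_mod (a := v % n₂) (Nat.mod_mod_of_dvd v dvd_rfl)
      (Nat.gcd_dvd_right (s.gcd f) n₂)]

/-- Multiplicativity of the Menon-type sum `S_χ(n,k)`: if `n = n₁n₂` with `gcd(n₁,n₂) = 1`
and `χ = χ₁·χ₂` under the CRT decomposition, then `S_χ(n,k) = S_{χ₁}(n₁,k) · S_{χ₂}(n₂,k)`. -/
theorem menon_sum_multiplicative (n₁ n₂ k : ℕ) [NeZero n₁] [NeZero n₂]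
    (hco : Nat.Coprime n₁ n₂)
    (χ : DirichletCharacter ℂ (n₁ * n₂)) (χ₁ : DirichletCharacter ℂ n₁)
    (χ₂ : DirichletCharacter ℂ n₂)
    (hdec : ∀ c : ℕ, Nat.Coprime c (n₁ * n₂) →
      χ (c : ZMod (n₁ * n₂)) = χ₁ (c : ZMod n₁) * χ₂ (c : ZMod n₂)) :
    ∑ a : (ZMod (n₁ * n₂))ˣ, ∑ b : Fin k → ZMod (n₁ * n₂),
      (Nat.gcd ((a : ZMod (n₁ * n₂)) - 1).val
        (Nat.gcd (Finset.univ.gcd fun i => (b i).val) (n₁ * n₂)) : ℂ) * χ a =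
    (∑ a : (ZMod n₁)ˣ, ∑ b : Fin k → ZMod n₁,
      (Nat.gcd ((a : ZMod n₁) - 1).val
        (Nat.gcd (Finset.univ.gcd fun i => (b i).val) n₁) : ℂ) * χ₁ a) *
    (∑ a : (ZMod n₂)ˣ, ∑ b : Fin k → ZMod n₂,
      (Nat.gcd ((a : ZMod n₂) - 1).val
        (Nat.gcd (Finset.univ.gcd fun i => (b i).val) n₂) : ℂ) * χ₂ a) := by
  classical
  haveI : NeZero (n₁ * n₂) := ⟨Nat.mul_ne_zero (NeZero.ne n₁) (NeZero.ne n₂)⟩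
  let π₁ : ZMod (n₁ * n₂) →+* ZMod n₁ := ZMod.castHom (dvd_mul_right n₁ n₂) _
  let π₂ : ZMod (n₁ * n₂) →+* ZMod n₂ := ZMod.castHom (dvd_mul_left n₂ n₁) _
  let e : ZMod (n₁ * n₂) ≃+* ZMod n₁ × ZMod n₂ := ZMod.chineseRemainder hco
  have he : ∀ x : ZMod (n₁ * n₂), e x = (π₁ x, π₂ x) := fun x =>
    DFunLike.congr_fun (RingHom.ext_zmod (e : ZMod (n₁ * n₂) →+* ZMod n₁ × ZMod n₂)
      (π₁.prod π₂)) x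
  have hπval₁ : ∀ x : ZMod (n₁ * n₂), (π₁ x).val = x.val % n₁ := fun x => by
    rw [show π₁ x = ((x.val : ℕ) : ZMod n₁) by
      rw [ZMod.natCast_val, ZMod.castHom_apply], ZMod.val_natCast]
  have hπval₂ : ∀ x : ZMod (n₁ * n₂), (π₂ x).val = x.val % n₂ := fun x => by
    rw [show π₂ x = ((x.val : ℕ) : ZMod n₂) by
      rw [ZMod.natCast_val, ZMod.castHom_apply], ZMod.val_natCast]
  let E : (ZMod (n₁ * n₂))ˣ ≃ (ZMod n₁)ˣ × (ZMod n₂)ˣ :=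
    ((Units.mapEquiv e.toMulEquiv).trans MulEquiv.prodUnits).toEquiv
  have hE1 : ∀ a : (ZMod (n₁ * n₂))ˣ, ((E a).1 : ZMod n₁) = π₁ (a : ZMod (n₁ * n₂)) := by
    intro a
    simp [E, MulEquiv.prodUnits, he]
  have hE2 : ∀ a : (ZMod (n₁ * n₂))ˣ, ((E a).2 : ZMod n₂) = π₂ (a : ZMod (n₁ * n₂)) := by
    intro a
    simp [E, MulEquiv.prodUnits, he]
  let B : (Fin k → ZMod (n₁ * n₂)) ≃ (Fin k → ZMod n₁) × (Fin k → ZMod n₂) :=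
    (Equiv.piCongrRight fun _ => e.toEquiv).trans
      (Equiv.arrowProdEquivProdArrow _ _ _)
  have hB1 : ∀ (b : Fin k → ZMod (n₁ * n₂)) (i : Fin k), (B b).1 i = π₁ (b i) := by
    intro b i
    simp [B, Equiv.arrowProdEquivProdArrow, he]
  have hB2 : ∀ (b : Fin k → ZMod (n₁ * n₂)) (i : Fin k), (B b).2 i = π₂ (b i) := by
    intro b i
    simp [B, Equiv.arrowProdEquivProdArrow, he]
  have hχ : ∀ a : (ZMod (n₁ * n₂))ˣ, χ a = χ₁ (E a).1 * χ₂ (E a).2 := by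
    intro a
    have hc := ZMod.val_coe_unit_coprime a
    have h1 := hdec ((a : ZMod (n₁ * n₂)).val) hc
    rw [ZMod.natCast_val, ZMod.cast_id] at h1
    rw [h1, hE1 a, hE2 a]
    congr 1
    · congr 1
      rw [ZMod.natCast_val, ZMod.castHom_apply]
    · congr 1
      rw [ZMod.natCast_val, ZMod.castHom_apply]
  -- pointwise gcd identity
  have hgcd : ∀ (a : (ZMod (n₁ * n₂))ˣ) (b : Fin k → ZMod (n₁ * n₂)),
      (Nat.gcd ((a : ZMod (n₁ * n₂)) - 1).val
        (Nat.gcd (Finset.univ.gcd fun i => (b i).val) (n₁ * n₂))) =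
      (Nat.gcd (((E a).1 : ZMod n₁) - 1).val
        (Nat.gcd (Finset.univ.gcd fun i => ((B b).1 i).val) n₁)) *
      (Nat.gcd (((E a).2 : ZMod n₂) - 1).val
        (Nat.gcd (Finset.univ.gcd fun i => ((B b).2 i).val) n₂)) := by
    intro a b
    have h1 : (((E a).1 : ZMod n₁) - 1).val = ((a : ZMod (n₁ * n₂)) - 1).val % n₁ := by
      rw [hE1 a, show π₁ (a : ZMod (n₁ * n₂)) - 1 = π₁ ((a : ZMod (n₁ * n₂)) - 1) by
        rw [map_sub, map_one], hπval₁]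
    have h2 : (((E a).2 : ZMod n₂) - 1).val = ((a : ZMod (n₁ * n₂)) - 1).val % n₂ := by
      rw [hE2 a, show π₂ (a : ZMod (n₁ * n₂)) - 1 = π₂ ((a : ZMod (n₁ * n₂)) - 1) by
        rw [map_sub, map_one], hπval₂]
    rw [h1, h2]
    have hb1 : (fun i => ((B b).1 i).val) = fun i => (b i).val % n₁ := by
      funext i; rw [hB1, hπval₁]
    have hb2 : (fun i => ((B b).2 i).val) = fun i => (b i).val % n₂ := by
      funext i; rw [hB2, hπval₂]
    rw [hb1, hb2]
    exact key_gcd hco _ _ _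
  calc ∑ a : (ZMod (n₁ * n₂))ˣ, ∑ b : Fin k → ZMod (n₁ * n₂),
      (Nat.gcd ((a : ZMod (n₁ * n₂)) - 1).val
        (Nat.gcd (Finset.univ.gcd fun i => (b i).val) (n₁ * n₂)) : ℂ) * χ a
      = ∑ a : (ZMod (n₁ * n₂))ˣ, ∑ b : Fin k → ZMod (n₁ * n₂),
        ((Nat.gcd (((E a).1 : ZMod n₁) - 1).val
          (Nat.gcd (Finset.univ.gcd fun i => ((B b).1 i).val) n₁) : ℂ) * χ₁ (E a).1) *
        ((Nat.gcd (((E a).2 : ZMod n₂) - 1).val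
          (Nat.gcd (Finset.univ.gcd fun i => ((B b).2 i).val) n₂) : ℂ) * χ₂ (E a).2) := by
        refine Finset.sum_congr rfl fun a _ => Finset.sum_congr rfl fun b _ => ?_
        rw [hgcd a b, hχ a, Nat.cast_mul]
        ring
    _ = ∑ a : (ZMod (n₁ * n₂))ˣ,
        (∑ b₁ : Fin k → ZMod n₁,
          (Nat.gcd (((E a).1 : ZMod n₁) - 1).val
            (Nat.gcd (Finset.univ.gcd fun i => (b₁ i).val) n₁) : ℂ) * χ₁ (E a).1) *
        (∑ b₂ : Fin k → ZMod n₂,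
          (Nat.gcd (((E a).2 : ZMod n₂) - 1).val
            (Nat.gcd (Finset.univ.gcd fun i => (b₂ i).val) n₂) : ℂ) * χ₂ (E a).2) := by
        refine Finset.sum_congr rfl fun a _ => ?_
        rw [Finset.sum_mul_sum]
        exact (Fintype.sum_equiv B _
          (fun p : (Fin k → ZMod n₁) × (Fin k → ZMod n₂) =>
            ((Nat.gcd (((E a).1 : ZMod n₁) - 1).val
              (Nat.gcd (Finset.univ.gcd fun i => (p.1 i).val) n₁) : ℂ) * χ₁ (E a).1) *
            ((Nat.gcd (((E a).2 : ZMod n₂) - 1).val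
              (Nat.gcd (Finset.univ.gcd fun i => (p.2 i).val) n₂) : ℂ) * χ₂ (E a).2))
          (fun b => rfl)).trans (Fintype.sum_prod_type _)
    _ = ∑ p : (ZMod n₁)ˣ × (ZMod n₂)ˣ,
        (∑ b₁ : Fin k → ZMod n₁,
          (Nat.gcd ((p.1 : ZMod n₁) - 1).val
            (Nat.gcd (Finset.univ.gcd fun i => (b₁ i).val) n₁) : ℂ) * χ₁ p.1) *
        (∑ b₂ : Fin k → ZMod n₂,
          (Nat.gcd ((p.2 : ZMod n₂) - 1).val
            (Nat.gcd (Finset.univ.gcd fun i => (b₂ i).val) n₂) : ℂ) * χ₂ p.2) :=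
        Fintype.sum_equiv E _ _ (fun a => rfl)
    _ = _ := by
        rw [Finset.sum_mul_sum]
        exact Fintype.sum_prod_type _
end

section
/- Let n be a positive integer, k ≥ 0, and χ the trivial (principal) Dirichlet character modulo n. Then ∑_{a ∈ (Z/nZ)*} ∑_{b₁,...,b_k ∈ Z/nZ} gcd(a-1, b₁, ..., b_k, n)·χ(a) = φ(n)·σ_k(n), i.e., the main identity recovers Sury's identity since the trivial character has conductor 1. -/
open Finset

private lemma ker_filter_card_mul {G H : Type*} [Group G] [Fintype G] [Group H] [Fintype H]
    [DecidableEq G] [DecidableEq H] (f : G →* H) (hf : Function.Surjective f) :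
    (Finset.univ.filter fun a => f a = 1).card * Fintype.card H = Fintype.card G := by
  classical
  have h1 : Nat.card f.ker = (Finset.univ.filter fun a => f a = 1).card := by
    rw [Nat.card_eq_fintype_card, ← Fintype.card_subtype]
    exact Fintype.card_congr (Equiv.subtypeEquivRight fun x => f.mem_ker)
  have h2 := Subgroup.card_mul_index f.ker
  rw [Subgroup.index_ker, MonoidHom.range_eq_top.mpr hf, Subgroup.card_top, h1,
    Nat.card_eq_fintype_card, Nat.card_eq_fintype_card] at h2
  exact h2

private lemma addker_filter_card_mul {G H : Type*} [AddGroup G] [Fintype G] [AddGroup H]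
    [Fintype H] [DecidableEq G] [DecidableEq H] (f : G →+ H) (hf : Function.Surjective f) :
    (Finset.univ.filter fun a => f a = 0).card * Fintype.card H = Fintype.card G := by
  classical
  have h1 : Nat.card f.ker = (Finset.univ.filter fun a => f a = 0).card := by
    rw [Nat.card_eq_fintype_card, ← Fintype.card_subtype]
    exact Fintype.card_congr (Equiv.subtypeEquivRight fun x => f.mem_ker)
  have h2 := AddSubgroup.card_mul_index f.ker
  rw [AddSubgroup.index_ker, AddMonoidHom.range_eq_top.mpr hf, AddSubgroup.card_top, h1,
    Nat.card_eq_fintype_card, Nat.card_eq_fintype_card] at h2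
  exact h2

private lemma castHom_val {n d : ℕ} [NeZero n] [NeZero d] (hd : d ∣ n) (x : ZMod n) :
    ZMod.castHom hd (ZMod d) x = (x.val : ZMod d) := by
  rw [ZMod.castHom_apply, ← ZMod.natCast_val]

private lemma card_zmod_fiber {n d : ℕ} [NeZero n] (hd : d ∣ n) (hd0 : d ≠ 0) :
    (Finset.univ.filter fun x : ZMod n => d ∣ x.val).card * d = n := by
  haveI : NeZero d := ⟨hd0⟩
  have hsurj : Function.Surjective (ZMod.castHom hd (ZMod d)).toAddMonoidHom := by
    intro y
    obtain ⟨m, rfl⟩ := ZMod.natCast_zmod_surjective y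
    exact ⟨(m : ZMod n), by simp⟩
  have h := addker_filter_card_mul (ZMod.castHom hd (ZMod d)).toAddMonoidHom hsurj
  rw [ZMod.card, ZMod.card] at h
  have hset : (Finset.univ.filter fun a : ZMod n => (ZMod.castHom hd (ZMod d)).toAddMonoidHom a = 0)
      = Finset.univ.filter fun x : ZMod n => d ∣ x.val := by
    ext x
    simp only [Finset.mem_filter, Finset.mem_univ, true_and, RingHom.toAddMonoidHom_eq_coe,
      AddMonoidHom.coe_coe, castHom_val hd]
    exact ZMod.natCast_eq_zero_iff _ _
  rw [hset] at h
  exact h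

private lemma card_units_fiber {n d : ℕ} [NeZero n] (hd : d ∣ n) (hd0 : d ≠ 0) :
    (Finset.univ.filter fun a : (ZMod n)ˣ => d ∣ ((a : ZMod n) - 1).val).card * d.totient
      = n.totient := by
  haveI : NeZero d := ⟨hd0⟩
  have h := ker_filter_card_mul (ZMod.unitsMap hd) (ZMod.unitsMap_surjective hd)
  rw [ZMod.card_units_eq_totient, ZMod.card_units_eq_totient] at h
  have hset : (Finset.univ.filter fun a : (ZMod n)ˣ => ZMod.unitsMap hd a = 1)
      = Finset.univ.filter fun a : (ZMod n)ˣ => d ∣ ((a : ZMod n) - 1).val := by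
    ext a
    simp only [Finset.mem_filter, Finset.mem_univ, true_and]
    have hcoe : ((ZMod.unitsMap hd a : ZMod d)) = ZMod.castHom hd (ZMod d) (a : ZMod n) := rfl
    rw [Units.ext_iff, Units.val_one, hcoe,
      show (1 : ZMod d) = ZMod.castHom hd (ZMod d) 1 from (map_one _).symm,
      ← sub_eq_zero, ← map_sub, castHom_val hd]
    exact ZMod.natCast_eq_zero_iff _ _
  rw [hset] at h
  exact h

private lemma gcd_eq_sum_totient (n x y : ℕ) (hn : n ≠ 0) :
    Nat.gcd x (Nat.gcd y n)
      = ∑ d ∈ n.divisors, if d ∣ x ∧ d ∣ y then d.totient else 0 := by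
  rw [← Finset.sum_filter]
  have hg : Nat.gcd x (Nat.gcd y n) ≠ 0 := fun h =>
    hn (Nat.eq_zero_of_gcd_eq_zero_right (Nat.eq_zero_of_gcd_eq_zero_right h))
  have : n.divisors.filter (fun d => d ∣ x ∧ d ∣ y) = (Nat.gcd x (Nat.gcd y n)).divisors := by
    ext d
    simp only [Finset.mem_filter, Nat.mem_divisors, Nat.dvd_gcd_iff]
    constructor
    · rintro ⟨⟨hdn, -⟩, hx, hy⟩
      exact ⟨⟨hx, hy, hdn⟩, hg⟩
    · rintro ⟨⟨hx, hy, hdn⟩, -⟩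
      exact ⟨⟨hdn, hn⟩, hx, hy⟩
  rw [this]
  exact (Nat.sum_totient _).symm

private lemma menon_nat (n k : ℕ) [NeZero n] :
    ∑ a : (ZMod n)ˣ, ∑ b : Fin k → ZMod n,
      Nat.gcd ((a : ZMod n) - 1).val
        (Nat.gcd (Finset.univ.gcd fun i => (b i).val) n)
      = n.totient * ArithmeticFunction.sigma k n := by
  classical
  have hn : n ≠ 0 := NeZero.ne n
  calc ∑ a : (ZMod n)ˣ, ∑ b : Fin k → ZMod n,
      Nat.gcd ((a : ZMod n) - 1).val (Nat.gcd (Finset.univ.gcd fun i => (b i).val) n)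
      = ∑ a : (ZMod n)ˣ, ∑ b : Fin k → ZMod n, ∑ d ∈ n.divisors,
          if d ∣ ((a : ZMod n) - 1).val ∧ ∀ i, d ∣ (b i).val then d.totient else 0 := by
        refine Finset.sum_congr rfl fun a _ => Finset.sum_congr rfl fun b _ => ?_
        rw [gcd_eq_sum_totient _ _ _ hn]
        refine Finset.sum_congr rfl fun d _ => ?_
        congr 1
        simp [Finset.dvd_gcd_iff]
    _ = ∑ d ∈ n.divisors, ∑ a : (ZMod n)ˣ, ∑ b : Fin k → ZMod n,
          if d ∣ ((a : ZMod n) - 1).val ∧ ∀ i, d ∣ (b i).val then d.totient else 0 := by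
        rw [show (∑ a : (ZMod n)ˣ, ∑ b : Fin k → ZMod n, ∑ d ∈ n.divisors,
            if d ∣ ((a : ZMod n) - 1).val ∧ ∀ i, d ∣ (b i).val then d.totient else 0)
            = ∑ a : (ZMod n)ˣ, ∑ d ∈ n.divisors, ∑ b : Fin k → ZMod n,
            if d ∣ ((a : ZMod n) - 1).val ∧ ∀ i, d ∣ (b i).val then d.totient else 0
          from Finset.sum_congr rfl fun a _ => Finset.sum_comm]
        exact Finset.sum_comm
    _ = ∑ d ∈ n.divisors,
          (∑ a : (ZMod n)ˣ, if d ∣ ((a : ZMod n) - 1).val then d.totient else 0) *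
          (∑ b : Fin k → ZMod n, if ∀ i, d ∣ (b i).val then 1 else 0) := by
        refine Finset.sum_congr rfl fun d _ => ?_
        rw [Finset.sum_mul_sum]
        refine Finset.sum_congr rfl fun a _ => Finset.sum_congr rfl fun b _ => ?_
        by_cases h1 : d ∣ ((a : ZMod n) - 1).val <;> by_cases h2 : ∀ i, d ∣ (b i).val <;>
          simp [h1, h2]
    _ = ∑ d ∈ n.divisors, n.totient * (n / d) ^ k := by
        refine Finset.sum_congr rfl fun d hd => ?_
        obtain ⟨hdvd, -⟩ := Nat.mem_divisors.mp hd
        have hd0 : d ≠ 0 := fun h => hn (by simpa [h] using hdvd)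
        congr 1
        · rw [← Finset.sum_filter, Finset.sum_const, smul_eq_mul]
          exact card_units_fiber hdvd hd0
        · have : (∑ b : Fin k → ZMod n, if ∀ i, d ∣ (b i).val then 1 else 0)
              = (∑ x : ZMod n, if d ∣ x.val then 1 else 0) ^ k := by
            rw [Fintype.sum_pow]
            refine Finset.sum_congr rfl fun b _ => ?_
            rw [Finset.prod_boole]
            simp
          rw [this]
          congr 1
          rw [← Finset.card_filter]
          exact Nat.div_eq_of_eq_mul_left (Nat.pos_of_ne_zero hd0)
            (card_zmod_fiber hdvd hd0).symm |>.symm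
    _ = n.totient * ∑ d ∈ n.divisors, (n / d) ^ k := by rw [Finset.mul_sum]
    _ = n.totient * ArithmeticFunction.sigma k n := by
        rw [Nat.sum_div_divisors n (· ^ k), ArithmeticFunction.sigma_apply]

/-- For the trivial (principal) Dirichlet character mod `n`, the main identity recovers
Sury's identity: `∑_{a,b₁,…,b_k} gcd(a-1, b₁, …, b_k, n) · χ(a) = φ(n) · σ_k(n)`. -/
theorem menon_trivial_character (n k : ℕ) [NeZero n]
    (χ : DirichletCharacter ℂ n) (hχ : χ = 1) :
    ∑ a : (ZMod n)ˣ, ∑ b : Fin k → ZMod n,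
      (Nat.gcd ((a : ZMod n) - 1).val
        (Nat.gcd (Finset.univ.gcd fun i => (b i).val) n) : ℂ) * χ a =
      (Nat.totient n * ArithmeticFunction.sigma k n : ℕ) := by
  subst hχ
  have h1 : ∀ a : (ZMod n)ˣ, (1 : DirichletCharacter ℂ n) ↑a = 1 := fun a =>
    MulChar.one_apply a.isUnit
  simp only [h1, mul_one]
  exact_mod_cast menon_nat n k
end
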